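/- Let τ be a smooth function with geodesic gradient on a Riemannian manifold (M,g), and let t ↦ x(t) be a nonconstant integral curve of v = grad τ whose τ-image is the interval (b,c). Then τ is strictly increasing along the curve, can be used as a parameter, and the length of the curve equals ∫_b^c Q^{-1/2} dτ, where Q = Q(τ) is the value of g(v,v) expressed as a function of τ along the curve. -/

import Mathlib

open Manifold
noncomputable section

variable {EV : Type*} [NormedAddCommGroup EV] [NormedSpace ℝ EV]
  {M : Type*} [TopologicalSpace M] [ChartedSpace EV M]
  [IsManifold 𝓘(ℝ, EV) (⊤ : ℕ∞) M]

/-- The (manifold) differential of a real-valued function, applied to a tangent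
vector (tangent spaces being canonically identified with the model space `EV`). -/
def mdiff (f : M → ℝ) (x : M) (w : EV) : ℝ :=
  mfderiv 𝓘(ℝ, EV) 𝓘(ℝ, ℝ) f x w

/-- A Riemannian metric together with its gradient operator and Levi-Civita
connection on a smooth manifold `M` modeled on `EV`. -/
structure RiemannData (EV : Type*) [NormedAddCommGroup EV] [NormedSpace ℝ EV]
    (M : Type*) [TopologicalSpace M] [ChartedSpace EV M]
    [IsManifold 𝓘(ℝ, EV) (⊤ : ℕ∞) M] where
  /-- the Riemannian metric -/
  g : M → EV →L[ℝ] EV →L[ℝ] ℝ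
  g_symm : ∀ x a b, g x a b = g x b a
  g_posdef : ∀ (x : M) (a : EV), a ≠ 0 → 0 < g x a a
  g_smooth : ∀ X Y : M → EV, ContMDiff 𝓘(ℝ, EV) 𝓘(ℝ, EV) (⊤ : ℕ∞) X →
    ContMDiff 𝓘(ℝ, EV) 𝓘(ℝ, EV) (⊤ : ℕ∞) Y →
    ContMDiff 𝓘(ℝ, EV) 𝓘(ℝ, ℝ) (⊤ : ℕ∞) (fun x => g x (X x) (Y x))
  /-- the gradient of a function, characterized by the metric -/
  grad : (M → ℝ) → M → EV
  grad_spec : ∀ (f : M → ℝ), ContMDiff 𝓘(ℝ, EV) 𝓘(ℝ, ℝ) (⊤ : ℕ∞) f →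
    ∀ (x : M) (w : EV), g x (grad f x) w = mdiff f x w
  /-- the Levi-Civita connection, acting on vector fields (written in the
  canonical identification of tangent spaces with `EV`) -/
  conn : (M → EV) → (M → EV) → (M → EV)
  conn_add : ∀ X Y Z, conn X (fun y => Y y + Z y) = fun y => conn X Y y + conn X Z y
  conn_tensorial : ∀ (h : M → ℝ) (X Y : M → EV) (x : M),
    conn (fun y => h y • X y) Y x = h x • conn X Y x
  conn_leibniz : ∀ (h : M → ℝ) (X Y : M → EV) (x : M),
    ContMDiff 𝓘(ℝ, EV) 𝓘(ℝ, ℝ) (⊤ : ℕ∞) h →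
    conn X (fun y => h y • Y y) x = (mdiff h x (X x)) • Y x + h x • conn X Y x
  conn_metric : ∀ (X Y Z : M → EV) (x : M),
    ContMDiff 𝓘(ℝ, EV) 𝓘(ℝ, EV) (⊤ : ℕ∞) Y → ContMDiff 𝓘(ℝ, EV) 𝓘(ℝ, EV) (⊤ : ℕ∞) Z →
    mdiff (fun y => g y (Y y) (Z y)) x (X x)
      = g x (conn X Y x) (Z x) + g x (Y x) (conn X Z x)
  conn_torsionFree : ∀ (X Y : M → EV) (f : M → ℝ) (x : M),
    ContMDiff 𝓘(ℝ, EV) 𝓘(ℝ, EV) (⊤ : ℕ∞) X → ContMDiff 𝓘(ℝ, EV) 𝓘(ℝ, EV) (⊤ : ℕ∞) Y →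
    ContMDiff 𝓘(ℝ, EV) 𝓘(ℝ, ℝ) (⊤ : ℕ∞) f →
    mdiff f x (conn X Y x - conn Y X x)
      = mdiff (fun y => mdiff f y (Y y)) x (X x)
        - mdiff (fun y => mdiff f y (X y)) x (Y x)

/-- The velocity vector of a curve in `M` (tangent spaces being canonically
identified with the model space `EV`). -/
def mvel (c : ℝ → M) (t : ℝ) : EV :=
  mfderiv 𝓘(ℝ, ℝ) 𝓘(ℝ, EV) c t ((1:ℝ) : TangentSpace 𝓘(ℝ, ℝ) t)

open MeasureTheory in
/-- Along a nonconstant integral curve `x` of `v = grad τ` (for a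
smooth function `τ` with geodesic gradient) whose `τ`-image is `(b,c)`, the
function `τ` is strictly increasing (so it may serve as a parameter), and the
length of the curve equals `∫_b^c Q^{-1/2} dτ`, where `Q` is `g(v,v)` expressed
as a function of `τ` along the curve. -/
theorem stmt12 (D : RiemannData EV M) (τ : M → ℝ)
    (hτ : ContMDiff 𝓘(ℝ, EV) 𝓘(ℝ, ℝ) (⊤ : ℕ∞) τ)
    (hgeo : ∀ (x : M) (a b : EV),
      mdiff (fun y => D.g y (D.grad τ y) (D.grad τ y)) x a * mdiff τ x b
        = mdiff (fun y => D.g y (D.grad τ y) (D.grad τ y)) x b * mdiff τ x a)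
    (t₀ t₁ : ℝ) (ht : t₀ < t₁) (x : ℝ → M)
    (hsmooth : ContMDiffOn 𝓘(ℝ, ℝ) 𝓘(ℝ, EV) (⊤ : ℕ∞) x (Set.Ioo t₀ t₁))
    (hintegral : ∀ t ∈ Set.Ioo t₀ t₁, mvel x t = D.grad τ (x t))
    (hnonzero : ∀ t ∈ Set.Ioo t₀ t₁, D.grad τ (x t) ≠ 0)
    (b c : ℝ)
    (himage : (fun t => τ (x t)) '' Set.Ioo t₀ t₁ = Set.Ioo b c)
    (Qf : ℝ → ℝ)
    (hQf : ∀ t ∈ Set.Ioo t₀ t₁,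
      D.g (x t) (D.grad τ (x t)) (D.grad τ (x t)) = Qf (τ (x t))) :
    StrictMonoOn (fun t => τ (x t)) (Set.Ioo t₀ t₁) ∧
    (∫ t in Set.Ioo t₀ t₁,
        Real.sqrt (D.g (x t) (mvel x t) (mvel x t)))
      = ∫ r in Set.Ioo b c, (Real.sqrt (Qf r))⁻¹ := by
  set φ : ℝ → ℝ := fun t => τ (x t) with hφdef
  have hderiv : ∀ t ∈ Set.Ioo t₀ t₁, HasDerivAt φ (Qf (φ t)) t := by
    intro t ht
    have hx : MDifferentiableAt 𝓘(ℝ, ℝ) 𝓘(ℝ, EV) x t :=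
      ((hsmooth t ht).contMDiffAt (Ioo_mem_nhds ht.1 ht.2)).mdifferentiableAt (by simp)
    have hτx : MDifferentiableAt 𝓘(ℝ, EV) 𝓘(ℝ, ℝ) τ (x t) := hτ.mdifferentiableAt (by simp)
    have hchain := mfderiv_comp t hτx hx
    have h1 : DifferentiableAt ℝ φ t := by
      rw [← mdifferentiableAt_iff_differentiableAt]
      exact hτx.comp t hx
    have hd := h1.hasDerivAt
    have heq : deriv φ t = mdiff τ (x t) ((mvel x t : EV)) := by
      rw [deriv, ← mfderiv_eq_fderiv]
      show mfderiv 𝓘(ℝ, ℝ) 𝓘(ℝ, ℝ) (τ ∘ x) t ((1:ℝ) : TangentSpace 𝓘(ℝ, ℝ) t) = _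
      rw [hchain]
      rfl
    have key : mdiff τ (x t) ((mvel x t : EV)) = Qf (φ t) := by
      rw [← D.grad_spec τ hτ, hintegral t ht, hQf t ht]
    rw [heq, key] at hd
    exact hd
  have hpos : ∀ t ∈ Set.Ioo t₀ t₁, 0 < Qf (φ t) := by
    intro t ht
    rw [← hQf t ht]
    exact D.g_posdef _ _ (hnonzero t ht)
  have hmono : StrictMonoOn φ (Set.Ioo t₀ t₁) := by
    apply strictMonoOn_of_deriv_pos (convex_Ioo _ _)
    · exact fun t ht => (hderiv t ht).continuousAt.continuousWithinAt
    · intro t ht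
      rw [interior_Ioo] at ht
      rw [(hderiv t ht).deriv]
      exact hpos t ht
  refine ⟨hmono, ?_⟩
  have hinj : Set.InjOn φ (Set.Ioo t₀ t₁) := hmono.injOn
  rw [← himage]
  rw [MeasureTheory.integral_image_eq_integral_abs_deriv_smul measurableSet_Ioo
    (fun t ht => (hderiv t ht).hasDerivWithinAt) hinj]
  apply MeasureTheory.setIntegral_congr_fun measurableSet_Ioo
  intro t ht
  have hQ := hpos t ht
  have h1 : D.g (x t) (mvel x t) (mvel x t) = Qf (φ t) := by
    rw [hintegral t ht]
    exact hQf t ht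
  have hs : Real.sqrt (Qf (φ t)) ≠ 0 := by
    positivity
  simp only [h1, smul_eq_mul, abs_of_pos hQ]
  rw [eq_comm, mul_inv_eq_iff_eq_mul₀ hs, Real.mul_self_sqrt hQ.le]

end
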